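/- The Bernoulli KGI index ν_t^{KGI}(Σ,n,γ) = Σ/n + H·Σ(Σ+1)/((n+1)(n+HΣ)) (with H > 0 fixed) is strictly increasing in Σ for fixed n (0 < Σ < n), and ν_t^{KGI}(cΣ, cn, γ) is decreasing in c > 0 for fixed Σ, n. -/

import Mathlib

/-- The Bernoulli KGI index. -/
noncomputable def nuKGI (H S n : ℝ) : ℝ :=
  S / n + H * S * (S + 1) / ((n + 1) * (n + H * S))

theorem kgi_bernoulli_monotone (H n : ℝ) (hH : 0 < H) (hn : 0 < n) :
    (∀ S₁ S₂ : ℝ, 0 < S₁ → S₁ < S₂ → S₂ < n → nuKGI H S₁ n < nuKGI H S₂ n) ∧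
    (∀ S : ℝ, 0 < S → S < n →
      ∀ c₁ c₂ : ℝ, 0 < c₂ → c₂ < c₁ →
        nuKGI H (c₁ * S) (c₁ * n) < nuKGI H (c₂ * S) (c₂ * n)) := by
  constructor
  · intro S₁ S₂ h1 h12 h2n
    have hS2 : 0 < S₂ := h1.trans h12
    unfold nuKGI
    have t1 : S₁ / n < S₂ / n := by gcongr
    have t2 : H * S₁ * (S₁ + 1) / ((n + 1) * (n + H * S₁)) <
        H * S₂ * (S₂ + 1) / ((n + 1) * (n + H * S₂)) := by
      rw [div_lt_div_iff₀ (by positivity) (by positivity)]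
      have key : H * S₁ * (S₁ + 1) * (n + H * S₂) < H * S₂ * (S₂ + 1) * (n + H * S₁) := by
        nlinarith [mul_pos (sub_pos.2 h12) hn, mul_pos (mul_pos h1 hS2) (sub_pos.2 h12),
          mul_pos hH (mul_pos (mul_pos h1 hS2) (sub_pos.2 h12)),
          mul_pos hH (mul_pos (sub_pos.2 h12) hn), mul_pos (add_pos h1 hS2) (sub_pos.2 h12)]
      nlinarith [mul_pos (mul_pos hH h1) (add_pos h1 one_pos), mul_pos hn (by positivity : (0:ℝ) < n + H * S₂)]
    exact add_lt_add t1 t2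
  · intro S hS hSn c₁ c₂ hc2 hc12
    have hc1 : 0 < c₁ := hc2.trans hc12
    have key : ∀ c : ℝ, 0 < c →
        nuKGI H (c * S) (c * n) = S / n + H * S * (c * S + 1) / ((c * n + 1) * (n + H * S)) := by
      intro c hc
      unfold nuKGI
      have h1 : (c * n : ℝ) ≠ 0 := by positivity
      have h2 : (c * n + 1 : ℝ) ≠ 0 := by positivity
      have h3 : (c * n + H * (c * S) : ℝ) ≠ 0 := by positivity
      have h4 : (n + H * S : ℝ) ≠ 0 := by positivity
      have hn' : (n : ℝ) ≠ 0 := ne_of_gt hn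
      field_simp
    rw [key c₁ hc1, key c₂ hc2]
    apply add_lt_add_of_le_of_lt le_rfl
    rw [div_lt_div_iff₀ (by positivity) (by positivity)]
    nlinarith [mul_pos (mul_pos hH hS) (mul_pos (sub_pos.2 hc12) (sub_pos.2 hSn)),
      mul_pos hH hS, sub_pos.2 hSn, sub_pos.2 hc12]
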